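/- (Alvarez-Gaumé–Witten 12-dimensional miraculous cancellation formula, eq. (0.1), at the level of Chern roots.) In the formal power series ring ℚ[[x₁, …, x₆]], the homogeneous component of total degree 6 of Π_{j=1}^{6} (2cosh(xⱼ/2)·A(xⱼ)) - 8·Π_{j=1}^{6} A(xⱼ) · Σ_{j=1}^{6}(e^{xⱼ} + e^{-xⱼ}) + 32·Π_{j=1}^{6} A(xⱼ) equals 0. (This is the Chern-root form of {L̂(TX)}^{(12)} = 8{Â(TX)ch(T_ℂX)}^{(12)} - 32{Â(TX)}^{(12)} on a 12-dimensional manifold X, since the Chern roots of T_ℂX are ±xⱼ, L̂(TX) = Πⱼ xⱼ/tanh(xⱼ/2) = Πⱼ 2cosh(xⱼ/2)A(xⱼ), and ch(T_ℂX) = Σⱼ(e^{xⱼ} + e^{-xⱼ}).) -/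

import Mathlib

open MvPowerSeries

/-- Formal exponential of a multivariate power series (with zero constant term):
the coefficient of a monomial `m` in `exp S` is `Σ_k coeff m (S^k) / k!`. -/
noncomputable def mexp {σ : Type*} (S : MvPowerSeries σ ℚ) : MvPowerSeries σ ℚ :=
  fun m => ∑ k ∈ Finset.range ((m.sum fun _ e => e) + 1),
    ((k.factorial : ℚ))⁻¹ * MvPowerSeries.coeff m (S ^ k)

noncomputable def emb (j : Fin 6) (f : ℕ → ℚ) : MvPowerSeries (Fin 6) ℚ :=
  fun m => if m = Finsupp.single j (m j) then f (m j) else 0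

lemma emb_coeff (j : Fin 6) (f : ℕ → ℚ) (m : Fin 6 →₀ ℕ) :
    MvPowerSeries.coeff m (emb j f) = if m = Finsupp.single j (m j) then f (m j) else 0 := rfl

lemma emb_coeff_single (j : Fin 6) (f : ℕ → ℚ) (n : ℕ) :
    MvPowerSeries.coeff (Finsupp.single j n) (emb j f) = f n := by
  rw [emb_coeff, Finsupp.single_eq_same, if_pos rfl]

def conv (f g : ℕ → ℚ) : ℕ → ℚ := fun n => ∑ p ∈ Finset.HasAntidiagonal.antidiagonal n, f p.1 * g p.2

lemma emb_mul (j : Fin 6) (f g : ℕ → ℚ) : emb j f * emb j g = emb j (conv f g) := by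
  ext m
  rw [MvPowerSeries.coeff_mul]
  by_cases h : m = Finsupp.single j (m j)
  · conv_lhs => rw [h]
    rw [Finsupp.antidiagonal_single, Finset.sum_map, emb_coeff, if_pos h]
    refine Eq.trans (Finset.sum_congr rfl ?_) rfl
    rintro ⟨u, v⟩ _
    simp only [Function.Embedding.coe_prodMap, Function.Embedding.coeFn_mk, Prod.map_apply,
      emb_coeff_single]
  · rw [emb_coeff, if_neg h]
    apply Finset.sum_eq_zero
    rintro ⟨p, q⟩ hpq
    rw [Finset.HasAntidiagonal.mem_antidiagonal] at hpq
    rw [emb_coeff, emb_coeff]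
    by_cases hp : p = Finsupp.single j (p j)
    · by_cases hq : q = Finsupp.single j (q j)
      · exfalso
        apply h
        have hm : m = Finsupp.single j (p j + q j) := by
          rw [Finsupp.single_add, ← hp, ← hq]; exact hpq.symm
        have hmj : m j = p j + q j := by rw [hm]; simp
        rw [hm, ← hmj]
        simp [hmj]
      · rw [if_neg hq, mul_zero]
    · rw [if_neg hp, zero_mul]

lemma sum_single (j : Fin 6) (n : ℕ) :
    ((Finsupp.single j n).sum fun _ e => e) = n := Finsupp.sum_single_index rfl

lemma mexp_smul_X (j : Fin 6) (c : ℚ) :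
    mexp (c • X j) = emb j (fun n => c ^ n * ((n.factorial : ℚ))⁻¹) := by
  ext m
  show mexp (c • X j) m = _
  rw [emb_coeff]
  unfold mexp
  have hpow : ∀ k : ℕ, MvPowerSeries.coeff m ((c • X j : MvPowerSeries (Fin 6) ℚ) ^ k)
      = c ^ k * (if m = Finsupp.single j k then 1 else 0) := by
    intro k
    rw [smul_pow, MvPowerSeries.coeff_smul, X_pow_eq, MvPowerSeries.coeff_monomial]
  by_cases h : m = Finsupp.single j (m j)
  · rw [if_pos h]
    have hsum : (m.sum fun _ e => e) = m j := by conv_lhs => rw [h, sum_single]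
    calc (∑ k ∈ Finset.range ((m.sum fun _ e => e) + 1),
          ((k.factorial : ℚ))⁻¹ * MvPowerSeries.coeff m ((c • X j) ^ k))
        = ∑ k ∈ Finset.range (m j + 1),
            (if k = m j then c ^ k * ((k.factorial : ℚ))⁻¹ else 0) := by
          rw [hsum]
          refine Finset.sum_congr rfl fun k _ => ?_
          rw [hpow]
          by_cases hk : k = m j
          · have : m = Finsupp.single j k := by rw [hk]; exact h
            rw [if_pos this, if_pos hk]; ring
          · have : m ≠ Finsupp.single j k := by
              intro hmk
              apply hk
              have hj : m j = k := by rw [hmk, Finsupp.single_eq_same]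
              exact hj.symm
            rw [if_neg this, if_neg hk]
            ring
      _ = c ^ (m j) * (((m j).factorial : ℚ))⁻¹ := by
          rw [Finset.sum_ite_eq' (Finset.range (m j + 1))]
          simp
  · rw [if_neg h]
    apply Finset.sum_eq_zero
    intro k _
    rw [hpow]
    have : m ≠ Finsupp.single j k := by
      intro hmk
      apply h
      rw [hmk, Finsupp.single_eq_same]
    rw [if_neg this, mul_zero, mul_zero]

lemma X_eq_emb (j : Fin 6) : (X j : MvPowerSeries (Fin 6) ℚ)
    = emb j (fun n => if n = 1 then 1 else 0) := by
  ext m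
  rw [MvPowerSeries.X, MvPowerSeries.coeff_monomial, emb_coeff]
  by_cases h : m = Finsupp.single j 1
  · have hmj : m j = 1 := by rw [h, Finsupp.single_eq_same]
    rw [if_pos h, if_pos (by rw [hmj]; exact h), hmj, if_pos rfl]
  · rw [if_neg h]
    by_cases h2 : m = Finsupp.single j (m j)
    · rw [if_pos h2]
      have : m j ≠ 1 := fun h1 => h (by rw [← h1]; exact h2)
      rw [if_neg this]
    · rw [if_neg h2]

lemma one_eq_emb (j : Fin 6) : (1 : MvPowerSeries (Fin 6) ℚ)
    = emb j (fun n => if n = 0 then 1 else 0) := by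
  ext m
  rw [MvPowerSeries.coeff_one, emb_coeff]
  by_cases h : m = 0
  · have hmj : m j = 0 := by rw [h]; rfl
    rw [if_pos h, if_pos (by rw [hmj, Finsupp.single_zero]; exact h), hmj, if_pos rfl]
  · rw [if_neg h]
    by_cases h2 : m = Finsupp.single j (m j)
    · rw [if_pos h2]
      have : m j ≠ 0 := fun h0 => h (by rw [h2, h0, Finsupp.single_zero])
      rw [if_neg this]
    · rw [if_neg h2]
lemma coeff_prod_emb (f : Fin 6 → ℕ → ℚ) (s : Finset (Fin 6)) (m : Fin 6 →₀ ℕ) :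
    MvPowerSeries.coeff m (∏ j ∈ s, emb j (f j))
      = if ∀ j, j ∉ s → m j = 0 then ∏ j ∈ s, f j (m j) else 0 := by
  classical
  induction s using Finset.induction_on generalizing m with
  | empty =>
    rw [Finset.prod_empty, Finset.prod_empty, MvPowerSeries.coeff_one]
    by_cases h : m = 0
    · rw [if_pos h, if_pos (fun j _ => by rw [h]; rfl)]
    · rw [if_neg h, if_neg]
      intro hall
      exact h (Finsupp.ext (fun j => hall j (Finset.notMem_empty j)))
  | @insert i s hi ih =>
    rw [Finset.prod_insert hi, MvPowerSeries.coeff_mul]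
    set p1 : Fin 6 →₀ ℕ := Finsupp.single i (m i) with hp1
    set p2 : Fin 6 →₀ ℕ := m - Finsupp.single i (m i) with hp2
    have hp2app : ∀ a, p2 a = m a - (if i = a then m i else 0) := by
      intro a
      rw [hp2, Finsupp.tsub_apply, Finsupp.single_apply]
    have hmem : (p1, p2) ∈ Finset.HasAntidiagonal.antidiagonal m := by
      rw [Finset.HasAntidiagonal.mem_antidiagonal]
      ext a
      rw [Finsupp.add_apply, hp2app a, Finsupp.single_apply]
      by_cases ha : i = a
      · subst ha; simp
      · simp [ha]
    rw [Finset.sum_eq_single_of_mem (p1, p2) hmem ?van]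
    case van =>
      rintro ⟨q1, q2⟩ hq hne
      rw [Finset.HasAntidiagonal.mem_antidiagonal] at hq
      rw [emb_coeff, ih]
      by_cases h1 : q1 = Finsupp.single i (q1 i)
      · by_cases h2 : ∀ j, j ∉ s → q2 j = 0
        · exfalso
          apply hne
          have hq2i : q2 i = 0 := h2 i hi
          have hq1i : q1 i = m i := by
            have := congrArg (fun z => z i) hq
            simpa [hq2i] using this
          have e1 : q1 = p1 := by rw [h1, hq1i]
          apply Prod.ext e1
          show q2 = p2
          ext a
          rw [hp2app a]
          by_cases ha : i = a
          · subst ha; simp [hq2i]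
          · have hq1a : q1 a = 0 := by
              rw [h1, Finsupp.single_apply, if_neg ha]
            have := congrArg (fun z => z a) hq
            simp only [Finsupp.add_apply] at this
            simp [ha, ← this, hq1a]
        · rw [if_neg h2, mul_zero]
      · rw [if_neg h1, zero_mul]
    · have hc1 : MvPowerSeries.coeff p1 (emb i (f i)) = f i (m i) := emb_coeff_single i _ _
      rw [hc1, ih]
      have hcond : (∀ j, j ∉ s → p2 j = 0) ↔ (∀ j, j ∉ insert i s → m j = 0) := by
        constructor
        · intro hall j hj
          have hjs : j ∉ s := fun hjs => hj (Finset.mem_insert_of_mem hjs)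
          have hji : ¬ i = j := fun e => hj (e ▸ Finset.mem_insert_self i s)
          have := hall j hjs
          rwa [hp2app j, if_neg hji, Nat.sub_zero] at this
        · intro hall j hjs
          rw [hp2app j]
          by_cases hji : i = j
          · subst hji; simp
          · rw [if_neg hji, Nat.sub_zero]
            exact hall j (by simp [Ne.symm hji, hjs, Finset.mem_insert])
      by_cases h2 : ∀ j, j ∉ insert i s → m j = 0
      · rw [if_pos (hcond.mpr h2), if_pos h2, Finset.prod_insert hi]
        congr 1
        refine Finset.prod_congr rfl fun j hj => ?_
        have hji : ¬ i = j := fun e => hi (e ▸ hj)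
        rw [hp2app j, if_neg hji, Nat.sub_zero]
      · rw [if_neg (fun hc => h2 (hcond.mp hc)), if_neg h2, mul_zero]
def ufun : ℕ → ℚ := fun n => if Even n then ((2:ℚ) ^ n * (((n+1).factorial : ℕ) : ℚ))⁻¹ else 0

def dd : ℕ → ℚ := fun n => if n = 1 then 1 else 0
def oneq : ℕ → ℚ := fun n => if n = 0 then 1 else 0

noncomputable def aa : ℕ → ℚ
  | 0 => 1
  | (n+1) => -∑ i ∈ (Finset.range (n+1)).attach,
      aa i * ufun (n+1-i)
  decreasing_by exact Finset.mem_range.mp i.2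

lemma conv_eq_range (f g : ℕ → ℚ) (n : ℕ) :
    conv f g n = ∑ i ∈ Finset.range (n+1), f i * g (n - i) := by
  rw [conv, Finset.Nat.sum_antidiagonal_eq_sum_range_succ_mk]

lemma aa_succ (n : ℕ) : aa (n+1) = -∑ i ∈ Finset.range (n+1), aa i * ufun (n+1-i) := by
  rw [aa, Finset.sum_attach (Finset.range (n+1)) (fun i => aa i * ufun (n+1-i))]

lemma conv_aa_u : conv aa ufun = oneq := by
  funext n
  rw [conv_eq_range]
  cases n with
  | zero => simp [aa, ufun, oneq]
  | succ n =>
    rw [Finset.sum_range_succ, aa_succ]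
    have hu0 : ufun ((n+1) - (n+1)) = 1 := by simp [ufun]
    rw [hu0, mul_one, add_neg_cancel]
    simp [oneq]

lemma cancel_X (j : Fin 6) (f g : MvPowerSeries (Fin 6) ℚ) (h : f * X j = g * X j) : f = g := by
  ext m
  have h2 := congrArg (MvPowerSeries.coeff (m + Finsupp.single j 1)) h
  rw [MvPowerSeries.X, MvPowerSeries.coeff_add_mul_monomial,
    MvPowerSeries.coeff_add_mul_monomial, mul_one, mul_one] at h2
  exact h2
noncomputable def sfun : ℕ → ℚ :=
  fun n => (2:ℚ)⁻¹ ^ n * ((n.factorial : ℕ) : ℚ)⁻¹ - (-(2:ℚ)⁻¹) ^ n * ((n.factorial : ℕ) : ℚ)⁻¹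

lemma conv_dd_ufun (n : ℕ) : conv dd ufun n = if n = 0 then 0 else ufun (n-1) := by
  rw [conv_eq_range]
  cases n with
  | zero => simp [dd]
  | succ n =>
    rw [Finset.sum_eq_single 1 (fun i _ hne => by simp [dd, hne])
      (fun h => absurd (Finset.mem_range.mpr (by omega)) h)]
    simp [dd]

lemma sfun_eq : sfun = conv dd ufun := by
  funext n
  rw [conv_dd_ufun, sfun]
  cases n with
  | zero => simp
  | succ n =>
    have hf : (((n+1).factorial : ℕ) : ℚ) ≠ 0 :=
      Nat.cast_ne_zero.mpr (Nat.factorial_pos _).ne'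
    rcases Nat.even_or_odd n with he | ho
    · have hodd : Odd (n+1) := Even.add_one he
      rw [Odd.neg_pow hodd, if_neg (Nat.succ_ne_zero n)]
      show (2:ℚ)⁻¹ ^ (n+1) * _ - -((2:ℚ)⁻¹ ^ (n+1)) * _ = ufun n
      rw [ufun, if_pos he]
      rw [inv_pow, pow_succ]
      have h2 : ((2:ℚ)^n)⁻¹ ≠ 0 := by positivity
      field_simp
      ring
    · have heven : Even (n+1) := Odd.add_one ho
      rw [Even.neg_pow heven, sub_self, if_neg (Nat.succ_ne_zero n), ufun]
      simp only [Nat.add_sub_cancel]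
      rw [if_neg (Nat.not_even_iff_odd.mpr ho)]

lemma emb_sub (j : Fin 6) (f g : ℕ → ℚ) :
    emb j f - emb j g = emb j (fun n => f n - g n) := by
  ext m
  rw [map_sub, emb_coeff, emb_coeff, emb_coeff]
  split_ifs <;> simp

lemma emb_add (j : Fin 6) (f g : ℕ → ℚ) :
    emb j f + emb j g = emb j (fun n => f n + g n) := by
  ext m
  rw [map_add, emb_coeff, emb_coeff, emb_coeff]
  split_ifs <;> simp
lemma mexp_neg_smul (j : Fin 6) (c : ℚ) : mexp (-(c • X j)) = mexp ((-c) • X j) := by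
  rw [neg_smul]

lemma A_eq (A : Fin 6 → MvPowerSeries (Fin 6) ℚ)
    (hA : ∀ j, A j * (mexp ((2 : ℚ)⁻¹ • X j) - mexp (-((2 : ℚ)⁻¹ • X j))) = X j)
    (j : Fin 6) : A j = emb j aa := by
  have h1 : A j * emb j sfun = X j := by
    have := hA j
    rwa [mexp_neg_smul, mexp_smul_X, mexp_smul_X, emb_sub] at this
  have h2 : emb j sfun = X j * emb j ufun := by
    rw [sfun_eq, ← emb_mul, X_eq_emb j]
    rfl
  have h3 : (A j * emb j ufun) * X j = 1 * X j := by
    rw [one_mul]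
    calc (A j * emb j ufun) * X j = A j * (X j * emb j ufun) := by ring
    _ = A j * emb j sfun := by rw [h2]
    _ = X j := h1
  have h4 : A j * emb j ufun = 1 := cancel_X j _ _ h3
  have h5 : emb j aa * emb j ufun = 1 := by
    rw [emb_mul, conv_aa_u, one_eq_emb j]
    rfl
  calc A j = A j * (emb j aa * emb j ufun) := by rw [h5, mul_one]
  _ = (A j * emb j ufun) * emb j aa := by ring
  _ = emb j aa := by rw [h4, one_mul]
def cf : ℕ → ℚ :=
  fun n => (2:ℚ)⁻¹ ^ n * ((n.factorial : ℕ) : ℚ)⁻¹ + (-(2:ℚ)⁻¹) ^ n * ((n.factorial : ℕ) : ℚ)⁻¹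
def dfn : ℕ → ℚ :=
  fun n => (1:ℚ) ^ n * ((n.factorial : ℕ) : ℚ)⁻¹ + (-1:ℚ) ^ n * ((n.factorial : ℕ) : ℚ)⁻¹

def LtZ : ℕ → ℤ := fun n => match n with
  | 0 => 1935360 | 2 => 161280 | 4 => -2688 | 6 => 64 | _ => 0
def AtZ : ℕ → ℤ := fun n => match n with
  | 0 => 967680 | 2 => -40320 | 4 => 1176 | 6 => -31 | _ => 0
def HtZ : ℕ → ℤ := fun n => match n with
  | 0 => 1935360 | 2 => 887040 | 4 => 42672 | 6 => 442 | _ => 0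

lemma u0 : ufun 0 = 1 := by norm_num [ufun, Nat.factorial]
lemma u1 : ufun 1 = 0 := by norm_num [ufun]
lemma u2 : ufun 2 = 1/24 := by norm_num [ufun, Nat.factorial]
lemma u3 : ufun 3 = 0 := by norm_num [ufun]
lemma u4 : ufun 4 = 1/1920 := by rw [ufun]; norm_num [Nat.factorial, if_pos (by decide : Even 4)]
lemma u5 : ufun 5 = 0 := by norm_num [ufun]
lemma u6 : ufun 6 = 1/322560 := by rw [ufun]; norm_num [Nat.factorial, if_pos (by decide : Even 6)]

lemma aa0 : aa 0 = 1 := by simp [aa]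
lemma aa1 : aa 1 = 0 := by
  have h := aa_succ 0
  rw [Finset.sum_range_one] at h
  norm_num [aa0, u1] at h
  exact h
lemma aa2 : aa 2 = -1/24 := by
  have h := aa_succ 1
  rw [Finset.sum_range_succ, Finset.sum_range_one] at h
  norm_num [aa0, aa1, u1, u2] at h
  linarith
lemma aa3 : aa 3 = 0 := by
  have h := aa_succ 2
  rw [Finset.sum_range_succ, Finset.sum_range_succ, Finset.sum_range_one] at h
  norm_num [aa0, aa1, aa2, u1, u2, u3] at h
  exact h
lemma aa4 : aa 4 = 7/5760 := by
  have h := aa_succ 3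
  rw [Finset.sum_range_succ, Finset.sum_range_succ, Finset.sum_range_succ,
    Finset.sum_range_one] at h
  norm_num [aa0, aa1, aa2, aa3, u1, u2, u3, u4] at h
  linarith
lemma aa5 : aa 5 = 0 := by
  have h := aa_succ 4
  rw [Finset.sum_range_succ, Finset.sum_range_succ, Finset.sum_range_succ,
    Finset.sum_range_succ, Finset.sum_range_one] at h
  norm_num [aa0, aa1, aa2, aa3, aa4, u1, u2, u3, u4, u5] at h
  exact h
lemma aa6 : aa 6 = -31/967680 := by
  have h := aa_succ 5
  rw [Finset.sum_range_succ, Finset.sum_range_succ, Finset.sum_range_succ,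
    Finset.sum_range_succ, Finset.sum_range_succ, Finset.sum_range_one] at h
  norm_num [aa0, aa1, aa2, aa3, aa4, aa5, u1, u2, u3, u4, u5, u6] at h
  linarith

lemma cf0 : cf 0 = 2 := by norm_num [cf, Nat.factorial]
lemma cf1 : cf 1 = 0 := by norm_num [cf, Nat.factorial]
lemma cf2 : cf 2 = 1/4 := by norm_num [cf, Nat.factorial]
lemma cf3 : cf 3 = 0 := by norm_num [cf, Nat.factorial]
lemma cf4 : cf 4 = 1/192 := by norm_num [cf, Nat.factorial]
lemma cf5 : cf 5 = 0 := by norm_num [cf, Nat.factorial]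
lemma cf6 : cf 6 = 1/23040 := by norm_num [cf, Nat.factorial]

lemma df0 : dfn 0 = 2 := by norm_num [dfn, Nat.factorial]
lemma df1 : dfn 1 = 0 := by norm_num [dfn, Nat.factorial]
lemma df2 : dfn 2 = 1 := by norm_num [dfn, Nat.factorial]
lemma df3 : dfn 3 = 0 := by norm_num [dfn, Nat.factorial]
lemma df4 : dfn 4 = 1/12 := by norm_num [dfn, Nat.factorial]
lemma df5 : dfn 5 = 0 := by norm_num [dfn, Nat.factorial]
lemma df6 : dfn 6 = 1/360 := by norm_num [dfn, Nat.factorial]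

lemma Lfv : ∀ n ≤ 6, conv cf aa n = (LtZ n : ℚ) / 967680 := by
  intro n hn
  interval_cases n <;>
    · rw [conv_eq_range]
      norm_num [Finset.sum_range_succ, cf0, cf1, cf2, cf3, cf4, cf5, cf6,
        aa0, aa1, aa2, aa3, aa4, aa5, aa6, LtZ]

lemma Hfv : ∀ n ≤ 6, conv aa dfn n = (HtZ n : ℚ) / 967680 := by
  intro n hn
  interval_cases n <;>
    · rw [conv_eq_range]
      norm_num [Finset.sum_range_succ, df0, df1, df2, df3, df4, df5, df6,
        aa0, aa1, aa2, aa3, aa4, aa5, aa6, HtZ]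

lemma aav : ∀ n ≤ 6, aa n = (AtZ n : ℚ) / 967680 := by
  intro n hn
  interval_cases n <;> norm_num [aa0, aa1, aa2, aa3, aa4, aa5, aa6, AtZ]
set_option maxHeartbeats 4000000 in
lemma keyZ : ∀ a b c d e f : Fin 7, (a:ℕ) + b + c + d + e + f = 6 →
    LtZ a * LtZ b * LtZ c * LtZ d * LtZ e * LtZ f
    - 8 * (HtZ a * AtZ b * AtZ c * AtZ d * AtZ e * AtZ f
         + AtZ a * HtZ b * AtZ c * AtZ d * AtZ e * AtZ f
         + AtZ a * AtZ b * HtZ c * AtZ d * AtZ e * AtZ f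
         + AtZ a * AtZ b * AtZ c * HtZ d * AtZ e * AtZ f
         + AtZ a * AtZ b * AtZ c * AtZ d * HtZ e * AtZ f
         + AtZ a * AtZ b * AtZ c * AtZ d * AtZ e * HtZ f)
    + 32 * (AtZ a * AtZ b * AtZ c * AtZ d * AtZ e * AtZ f) = 0 := by decide

lemma bridge (a b c d e f : ℕ) (h : a + b + c + d + e + f = 6) :
    conv cf aa a * conv cf aa b * conv cf aa c * conv cf aa d * conv cf aa e * conv cf aa f
    - 8 * (conv aa dfn a * aa b * aa c * aa d * aa e * aa f
         + aa a * conv aa dfn b * aa c * aa d * aa e * aa f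
         + aa a * aa b * conv aa dfn c * aa d * aa e * aa f
         + aa a * aa b * aa c * conv aa dfn d * aa e * aa f
         + aa a * aa b * aa c * aa d * conv aa dfn e * aa f
         + aa a * aa b * aa c * aa d * aa e * conv aa dfn f)
    + 32 * (aa a * aa b * aa c * aa d * aa e * aa f) = 0 := by
  have ha : a ≤ 6 := by omega
  have hb : b ≤ 6 := by omega
  have hc : c ≤ 6 := by omega
  have hd : d ≤ 6 := by omega
  have he : e ≤ 6 := by omega
  have hf : f ≤ 6 := by omega
  rw [Lfv a ha, Lfv b hb, Lfv c hc, Lfv d hd, Lfv e he, Lfv f hf,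
    Hfv a ha, Hfv b hb, Hfv c hc, Hfv d hd, Hfv e he, Hfv f hf,
    aav a ha, aav b hb, aav c hc, aav d hd, aav e he, aav f hf]
  have hZ : LtZ a * LtZ b * LtZ c * LtZ d * LtZ e * LtZ f
    - 8 * (HtZ a * AtZ b * AtZ c * AtZ d * AtZ e * AtZ f
         + AtZ a * HtZ b * AtZ c * AtZ d * AtZ e * AtZ f
         + AtZ a * AtZ b * HtZ c * AtZ d * AtZ e * AtZ f
         + AtZ a * AtZ b * AtZ c * HtZ d * AtZ e * AtZ f
         + AtZ a * AtZ b * AtZ c * AtZ d * HtZ e * AtZ f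
         + AtZ a * AtZ b * AtZ c * AtZ d * AtZ e * HtZ f)
    + 32 * (AtZ a * AtZ b * AtZ c * AtZ d * AtZ e * AtZ f) = 0 :=
    keyZ ⟨a, by omega⟩ ⟨b, by omega⟩ ⟨c, by omega⟩ ⟨d, by omega⟩ ⟨e, by omega⟩ ⟨f, by omega⟩ h
  have hQ := congrArg (fun z : ℤ => (z : ℚ)) hZ
  push_cast at hQ
  linear_combination ((967680 : ℚ) ^ 6)⁻¹ * hQ
lemma prod_mul_emb (g h : ℕ → ℚ) (k : Fin 6) :
    (∏ j, emb j g) * emb k h = ∏ j, emb j (if j = k then conv g h else g) := by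
  rw [← Finset.mul_prod_erase Finset.univ (fun j => emb j g) (Finset.mem_univ k),
    ← Finset.mul_prod_erase Finset.univ (fun j => emb j (if j = k then conv g h else g))
      (Finset.mem_univ k)]
  rw [if_pos rfl]
  have : ∏ j ∈ Finset.univ.erase k, emb j (if j = k then conv g h else g)
      = ∏ j ∈ Finset.univ.erase k, emb j g := by
    refine Finset.prod_congr rfl fun j hj => ?_
    rw [if_neg (Finset.ne_of_mem_erase hj)]
  rw [this, ← emb_mul]
  ring

/-- The Alvarez-Gaumé–Witten 12-dimensional miraculous cancellation formula (eq. (0.1)),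
`{L̂(TX)}^{(12)} = 8{Â(TX) ch(T_ℂX)}^{(12)} - 32{Â(TX)}^{(12)}`, at the level of Chern
roots `±xⱼ` of `T_ℂX` (`dim X = 12`): the degree-6 homogeneous component of
`Π(2cosh(xⱼ/2)A(xⱼ)) - 8 ΠA(xⱼ) Σ(e^{xⱼ}+e^{-xⱼ}) + 32 ΠA(xⱼ)` vanishes.
`A j` is the Â-series of `xⱼ`, characterized by `A(x)(e^{x/2} - e^{-x/2}) = x`. -/
theorem miraculous_cancellation_dim12
    (A : Fin 6 → MvPowerSeries (Fin 6) ℚ)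
    (hA : ∀ j, A j * (mexp ((2 : ℚ)⁻¹ • X j) - mexp (-((2 : ℚ)⁻¹ • X j))) = X j)
    (m : Fin 6 →₀ ℕ) (hm : (m.sum fun _ e => e) = 6) :
    MvPowerSeries.coeff m
      ((∏ j, (mexp ((2 : ℚ)⁻¹ • X j) + mexp (-((2 : ℚ)⁻¹ • X j))) * A j)
        - 8 * (∏ j, A j) * (∑ j, (mexp (X j) + mexp (-X j)))
        + 32 * ∏ j, A j)
    = 0 := by
  have h1 : ∀ j, (mexp ((2 : ℚ)⁻¹ • X j) + mexp (-((2 : ℚ)⁻¹ • X j))) * A j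
      = emb j (conv cf aa) := by
    intro j
    rw [mexp_neg_smul, mexp_smul_X, mexp_smul_X, A_eq A hA j, emb_add, emb_mul]
    rfl
  have h2 : ∀ j : Fin 6, mexp (X j) + mexp (-X j) = emb j dfn := by
    intro j
    have hX : (X j : MvPowerSeries (Fin 6) ℚ) = (1:ℚ) • X j := (one_smul ℚ (X j)).symm
    rw [hX, mexp_neg_smul, mexp_smul_X, mexp_smul_X, emb_add]
    rfl
  simp only [h1]
  simp only [h2]
  simp only [A_eq A hA]
  rw [mul_assoc, Finset.mul_sum]
  simp only [prod_mul_emb]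
  have e8 : (8 : MvPowerSeries (Fin 6) ℚ) = (MvPowerSeries.C (σ := Fin 6) (R := ℚ)) 8 :=
    (map_ofNat ((MvPowerSeries.C (σ := Fin 6) (R := ℚ))) 8).symm
  have e32 : (32 : MvPowerSeries (Fin 6) ℚ) = (MvPowerSeries.C (σ := Fin 6) (R := ℚ)) 32 :=
    (map_ofNat ((MvPowerSeries.C (σ := Fin 6) (R := ℚ))) 32).symm
  rw [map_add, map_sub, e8, e32, MvPowerSeries.coeff_C_mul, MvPowerSeries.coeff_C_mul, map_sum]
  simp only [coeff_prod_emb]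
  have hcond : (∀ j : Fin 6, j ∉ Finset.univ → m j = 0) := fun j hj =>
    absurd (Finset.mem_univ j) hj
  simp only [if_pos hcond]
  have hsum : m 0 + m 1 + m 2 + m 3 + m 4 + m 5 = 6 := by
    have : (m.sum fun _ e => e) = ∑ j, m j := Finsupp.sum_fintype _ _ (fun i => rfl)
    rw [this, Fin.sum_univ_six] at hm
    exact hm
  simp only [Fin.prod_univ_six, Fin.sum_univ_six]
  simp only [reduceIte]
  exact bridge (m 0) (m 1) (m 2) (m 3) (m 4) (m 5) hsum
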